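/- Let H be a complex Hilbert space and A : H → H a bounded linear operator. The following are equivalent: (a) A is coercive; (b) A = c(B + iG) for some c ∈ ℂ \ {0} and bounded linear operators B, G on H such that G is self-adjoint and B is strictly positive definite (i.e. B is self-adjoint and there exists β > 0 with ⟨Bφ, φ⟩ ≥ β‖φ‖² for all φ ∈ H); (c) A = c(I + B) for some c ∈ ℂ \ {0} and bounded linear operator B on H with ‖B‖ < 1; (d) 0 does not belong to the closure of the numerical range W(A); (e) there exist θ ∈ ℝ and α > 0 such that Re(e^{iθ}⟨Aφ, φ⟩) ≥ α‖φ‖² for all φ ∈ H. -/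

import Mathlib

open scoped ComplexInnerProductSpace

open Complex
set_option linter.unusedSectionVars false
set_option maxHeartbeats 1600000

variable {H : Type*} [NormedAddCommGroup H] [InnerProductSpace ℂ H] [CompleteSpace H]

/-- A bounded linear operator `A` on a complex Hilbert space is *coercive* if there exists
`α > 0` such that `|⟨Aφ, φ⟩| ≥ α‖φ‖²` for all `φ`. -/
def Coercive (A : H →L[ℂ] H) : Prop :=
  ∃ α : ℝ, 0 < α ∧ ∀ φ : H, α * ‖φ‖ ^ 2 ≤ ‖⟪A φ, φ⟫‖

/-- The numerical range `W(A) = {⟨Aψ, ψ⟩ : ‖ψ‖ = 1}` of a bounded linear operator. -/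
def numericalRange (A : H →L[ℂ] H) : Set ℂ :=
  {z | ∃ ψ : H, ‖ψ‖ = 1 ∧ z = ⟪A ψ, ψ⟫}

lemma q_real_smul (A : H →L[ℂ] H) (r : ℝ) (φ : H) :
    ⟪A ((r:ℂ) • φ), (r:ℂ) • φ⟫ = (r^2 : ℂ) * ⟪A φ, φ⟫ := by
  rw [map_smul, inner_smul_left, inner_smul_right, Complex.conj_ofReal]
  ring

lemma q_smul (A : H →L[ℂ] H) (c : ℂ) (φ : H) :
    ⟪(c • A) φ, φ⟫ = (starRingEnd ℂ) c * ⟪A φ, φ⟫ := by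
  simp [inner_smul_left]; ring

lemma exists_eta (p q : ℝ) : ∃ η : ℂ, ‖η‖ = 1 ∧ η.re * p + η.im * q = 0 := by
  by_cases h : p = 0 ∧ q = 0
  · exact ⟨1, by simp, by simp [h.1, h.2]⟩
  · have hr : (0:ℝ) < Real.sqrt (p^2 + q^2) := by
      rcases not_and_or.mp h with h' | h' <;>
        exact Real.sqrt_pos.mpr (by positivity)
    set r := Real.sqrt (p^2+q^2)
    have hr2 : r^2 = p^2+q^2 := Real.sq_sqrt (by positivity)
    refine ⟨⟨-q/r, p/r⟩, ?_, by field_simp; ring⟩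
    have : ‖(⟨-q/r, p/r⟩ : ℂ)‖ = 1 := by
      rw [Complex.norm_def, Complex.normSq_mk,
        show -q/r * (-q/r) + p/r * (p/r) = (p^2+q^2)/r^2 by ring,
        ← hr2, div_self (by positivity)]
      exact Real.sqrt_one
    exact this

lemma numRange_convex (A : H →L[ℂ] H) : Convex ℝ (numericalRange A) := by
  intro z hz w hw a b ha hb hab
  have hsm : ∀ (u v : ℝ) (ζ ξ : ℂ), u • ζ + v • ξ = (u:ℂ)*ζ + (v:ℂ)*ξ := by
    intro u v ζ ξ; rw [Complex.real_smul, Complex.real_smul]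
  rcases eq_or_ne z w with rfl | hzw
  · have : a • z + b • z = z := by
      rw [hsm, ← add_mul]; norm_cast; rw [hab, Complex.ofReal_one, one_mul]
    rw [this]; exact hw
  rcases eq_or_lt_of_le ha with ha0 | ha
  · have hb1 : b = 1 := by linarith
    rw [← ha0, hb1]; simpa using hw
  obtain ⟨x, hx, hzq⟩ := hz
  obtain ⟨y, hy, hwq⟩ := hw
  set C := (starRingEnd ℂ) ((z-w)⁻¹) • (A - (starRingEnd ℂ) w • (1 : H →L[ℂ] H)) with hC
  have hzwne : z - w ≠ 0 := sub_ne_zero.mpr hzw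
  have hqC : ∀ φ : H, ⟪C φ, φ⟫ = (z - w)⁻¹ * (⟪A φ, φ⟫ - w * (‖φ‖:ℂ)^2) := by
    intro φ
    simp [hC, inner_smul_left, inner_sub_left, ContinuousLinearMap.sub_apply,
      ContinuousLinearMap.smul_apply, ContinuousLinearMap.one_apply,
      inner_self_eq_norm_sq_to_K]
    ring
  have hCx : ⟪C x, x⟫ = 1 := by
    rw [hqC, hx, ← hzq, Complex.ofReal_one, one_pow, mul_one, inv_mul_cancel₀ hzwne]
  have hCy : ⟪C y, y⟫ = 0 := by
    rw [hqC, hy, ← hwq, Complex.ofReal_one, one_pow, mul_one, sub_self, mul_zero]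
  obtain ⟨η, hη1, hη2⟩ := exists_eta ((⟪C x, y⟫).im + (⟪C y, x⟫).im) ((⟪C y, x⟫).re - (⟪C x, y⟫).re)
  set x' := η • x with hx'
  have hηabs : ‖η‖ = 1 := hη1
  have hηη : (starRingEnd ℂ) η * η = 1 := by
    rw [mul_comm, Complex.mul_conj, Complex.normSq_eq_norm_sq, hηabs]
    norm_num
  have hx'n : ‖x'‖ = 1 := by rw [hx', norm_smul, hη1, hx, one_mul]
  have hCx' : ⟪C x', x'⟫ = 1 := by
    rw [hx', map_smul, inner_smul_left, inner_smul_right, ← mul_assoc, hηη, one_mul, hCx]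
  have ha'' : ⟪C x', y⟫ = (starRingEnd ℂ) η * ⟪C x, y⟫ := by
    rw [hx', map_smul, inner_smul_left]
  have hb'' : ⟪C y, x'⟫ = η * ⟪C y, x⟫ := by rw [hx', inner_smul_right]
  set K := ⟪C x', y⟫ + ⟪C y, x'⟫ with hKdef
  have hKim : K.im = 0 := by
    rw [hKdef, ha'', hb'']
    simp only [Complex.add_im, Complex.mul_im, Complex.conj_re, Complex.conj_im]
    linarith [hη2]
  set φf : ℝ → H := fun s => (s:ℂ) • x' + ((1-s:ℝ):ℂ) • y with hφf
  have hqφ : ∀ s : ℝ, ⟪C (φf s), φf s⟫ = (s:ℂ)^2 + (s:ℂ)*((1-s:ℝ):ℂ)*K := by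
    intro s
    simp only [hφf, map_add, map_smul, inner_add_left, inner_add_right,
      inner_smul_left, inner_smul_right, Complex.conj_ofReal, hKdef]
    rw [hCx', hCy]
    push_cast
    ring
  have hφne : ∀ s : ℝ, φf s ≠ 0 := by
    intro s hcon
    rcases eq_or_ne s 1 with rfl | hs1
    · have : x' = 0 := by simpa [hφf] using hcon
      rw [this] at hx'n; simp at hx'n
    · have h1s : (1:ℝ) - s ≠ 0 := sub_ne_zero.mpr (fun h => hs1 (by linarith))
      have h1sc : ((1-s:ℝ):ℂ) ≠ 0 := by exact_mod_cast h1s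
      set c : ℂ := -((s:ℂ)/((1-s:ℝ):ℂ)) with hc
      have h2 : ((1-s:ℝ):ℂ) • y = -((s:ℂ) • x') := by
        rw [eq_neg_iff_add_eq_zero]; simpa [hφf, add_comm] using hcon
      have hyx : y = c • x' := by
        have h4 : y = ((1-s:ℝ):ℂ)⁻¹ • (((1-s:ℝ):ℂ) • y) := (inv_smul_smul₀ h1sc y).symm
        rw [h4, h2, smul_neg, smul_smul, hc, ← neg_smul]
        congr 1
        field_simp
      have h3 : (starRingEnd ℂ) c * (c * 1) = 0 := by
        rw [← hCx', ← inner_smul_right, ← inner_smul_left, ← map_smul, ← hyx, hCy]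
      have hc0 : c = 0 := by
        rcases mul_eq_zero.mp h3 with h | h
        · simpa using congrArg (starRingEnd ℂ) h
        · rw [mul_one] at h; exact h
      rw [hc0, zero_smul] at hyx
      rw [hyx] at hy; simp at hy
  have hcontφ : Continuous φf := by rw [hφf]; fun_prop
  set g : ℝ → ℝ := fun s => (s^2 + s*(1-s)*K.re) / ‖φf s‖^2 with hg
  have hgc : ContinuousOn g (Set.Icc 0 1) := by
    apply ContinuousOn.div
    · apply Continuous.continuousOn; fun_prop
    · exact ((hcontφ.norm.pow 2)).continuousOn
    · intro s _
      exact pow_ne_zero 2 (norm_ne_zero_iff.mpr (hφne s))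
  have hφ0 : φf 0 = y := by simp [hφf]
  have hφ1 : φf 1 = x' := by simp [hφf]
  have hg0 : g 0 = 0 := by simp [hg]
  have hg1 : g 1 = 1 := by simp [hg, hφ1, hx'n]
  have hmem : a ∈ Set.Icc (g 0) (g 1) := by
    rw [hg0, hg1]; exact ⟨le_of_lt ha, by linarith⟩
  obtain ⟨s, hsmem, hgs⟩ := intermediate_value_Icc zero_le_one hgc hmem
  have hn : ‖φf s‖ ≠ 0 := norm_ne_zero_iff.mpr (hφne s)
  set u := ((‖φf s‖⁻¹ : ℝ):ℂ) • φf s with hu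
  have hun : ‖u‖ = 1 := by
    rw [hu, norm_smul]
    simp [norm_inv, inv_mul_cancel₀ hn]
  have hK : K = (K.re : ℂ) := Complex.ext (by simp) (by simp [hKim])
  have hqu : ⟪C u, u⟫ = (a:ℂ) := by
    rw [hu, q_real_smul, hqφ, hK, ← hgs, hg]
    push_cast
    field_simp
  have hq : ⟪A u, u⟫ = (a:ℂ)*z + (b:ℂ)*w := by
    have t1 := (hqC u).symm
    rw [hqu, hun, Complex.ofReal_one, one_pow, mul_one] at t1
    have t2 : (z - w) * ((z-w)⁻¹ * (⟪A u, u⟫ - w)) = (z - w) * (a:ℂ) := congrArg _ t1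
    rw [← mul_assoc, mul_inv_cancel₀ hzwne, one_mul] at t2
    have hba : (b:ℂ) = 1 - (a:ℂ) := by
      have : b = 1 - a := by linarith
      rw [this]; push_cast; ring
    rw [hba]
    linear_combination t2
  exact ⟨u, hun, by rw [hq, hsm]⟩

lemma key_scale (A : H →L[ℂ] H) (φ : H) (hφ : φ ≠ 0) :
    ∃ ψ : H, ‖ψ‖ = 1 ∧ ⟪A φ, φ⟫ = ((‖φ‖:ℂ))^2 * ⟪A ψ, ψ⟫ := by
  refine ⟨((‖φ‖⁻¹ : ℝ) : ℂ) • φ, ?_, ?_⟩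
  · simp [norm_smul, norm_inv, inv_mul_cancel₀ (norm_ne_zero_iff.mpr hφ)]
  · rw [q_real_smul]
    have h : (‖φ‖ : ℂ) ≠ 0 := by exact_mod_cast norm_ne_zero_iff.mpr hφ
    push_cast
    field_simp

lemma had (A : H →L[ℂ] H) (h : Coercive A) : (0:ℂ) ∉ closure (numericalRange A) := by
  obtain ⟨α, hα, h⟩ := h
  intro h0
  have hsub : closure (numericalRange A) ⊆ {z : ℂ | α ≤ ‖z‖} := by
    apply closure_minimal
    · rintro z ⟨ψ, hψ, rfl⟩
      simpa [hψ] using h ψ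
    · exact isClosed_le continuous_const continuous_norm
  have := hsub h0
  simp only [Set.mem_setOf_eq, norm_zero] at this
  linarith

lemma hda (A : H →L[ℂ] H) (h0 : (0:ℂ) ∉ closure (numericalRange A)) : Coercive A := by
  rw [Metric.mem_closure_iff] at h0
  push_neg at h0
  obtain ⟨ε, hε, hb⟩ := h0
  refine ⟨ε, hε, fun φ => ?_⟩
  rcases eq_or_ne φ 0 with rfl | hφ
  · simp
  · obtain ⟨ψ, hψ, hqe⟩ := key_scale A φ hφ
    have h1 : ε ≤ ‖⟪A ψ, ψ⟫‖ := by
      have := hb _ ⟨ψ, hψ, rfl⟩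
      simpa [dist_eq_norm] using this
    rw [hqe, norm_mul]
    have h2 : ‖((‖φ‖:ℂ))^2‖ = ‖φ‖^2 := by
      rw [norm_pow, Complex.norm_real, norm_norm]
    rw [h2]
    nlinarith [sq_nonneg ‖φ‖]

lemma hea (A : H →L[ℂ] H)
    (h : ∃ θ : ℝ, ∃ α : ℝ, 0 < α ∧ ∀ φ : H,
      α * ‖φ‖ ^ 2 ≤ (Complex.exp ((θ : ℂ) * Complex.I) * ⟪A φ, φ⟫).re) : Coercive A := by
  obtain ⟨θ, α, hα, h⟩ := h
  refine ⟨α, hα, fun φ => ?_⟩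
  calc α * ‖φ‖^2 ≤ (Complex.exp ((θ : ℂ) * Complex.I) * ⟪A φ, φ⟫).re := h φ
    _ ≤ ‖Complex.exp ((θ : ℂ) * Complex.I) * ⟪A φ, φ⟫‖ := Complex.re_le_norm _
    _ = ‖Complex.exp ((θ : ℂ) * Complex.I)‖ * ‖⟪A φ, φ⟫‖ := norm_mul _ _
    _ = ‖⟪A φ, φ⟫‖ := by rw [Complex.norm_exp_ofReal_mul_I, one_mul]

lemma sa_im (T : H →L[ℂ] H) (hT : IsSelfAdjoint T) (φ : H) : (⟪T φ, φ⟫).im = 0 := by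
  have h1 : ⟪T φ, φ⟫ = (starRingEnd ℂ) ⟪T φ, φ⟫ := by
    conv_lhs => rw [← hT.adjoint_eq]
    rw [ContinuousLinearMap.adjoint_inner_left, ← inner_conj_symm]
  have := congrArg Complex.im h1
  simp only [Complex.conj_im] at this
  linarith

lemma hba (A : H →L[ℂ] H)
    (h : ∃ c : ℂ, c ≠ 0 ∧ ∃ B G : H →L[ℂ] H, IsSelfAdjoint G ∧
        (IsSelfAdjoint B ∧ ∃ β : ℝ, 0 < β ∧ ∀ φ : H, β * ‖φ‖ ^ 2 ≤ (⟪B φ, φ⟫).re) ∧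
        A = c • (B + Complex.I • G)) : Coercive A := by
  obtain ⟨c, hc, B, G, hG, ⟨hB, β, hβ, hBpos⟩, rfl⟩ := h
  have habs : (0:ℝ) < ‖c‖ := norm_pos_iff.mpr hc
  refine ⟨‖c‖ * β, mul_pos habs hβ, fun φ => ?_⟩
  have hq : ⟪(c • (B + Complex.I • G)) φ, φ⟫
      = (starRingEnd ℂ) c * (⟪B φ, φ⟫ - Complex.I * ⟪G φ, φ⟫) := by
    simp [inner_smul_left, inner_add_left, ContinuousLinearMap.add_apply,
      ContinuousLinearMap.smul_apply, Complex.conj_I]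
    ring
  rw [hq, norm_mul]
  have hcn : ‖(starRingEnd ℂ) c‖ = ‖c‖ := by
    rw [Complex.norm_conj]
  rw [hcn]
  have hre : (⟪B φ, φ⟫ - Complex.I * ⟪G φ, φ⟫).re = (⟪B φ, φ⟫).re := by
    simp [Complex.sub_re, Complex.mul_re, sa_im G hG φ]
  have h2 : (⟪B φ, φ⟫).re ≤ ‖⟪B φ, φ⟫ - Complex.I * ⟪G φ, φ⟫‖ := by
    rw [← hre]
    exact Complex.re_le_norm _
  have h3 := hBpos φ
  nlinarith

lemma hca (A : H →L[ℂ] H)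
    (h : ∃ c : ℂ, c ≠ 0 ∧ ∃ B : H →L[ℂ] H, ‖B‖ < 1 ∧ A = c • ((1 : H →L[ℂ] H) + B)) :
    Coercive A := by
  obtain ⟨c, hc, B, hB, rfl⟩ := h
  have habs : (0:ℝ) < ‖c‖ := norm_pos_iff.mpr hc
  refine ⟨‖c‖ * (1 - ‖B‖), mul_pos habs (by linarith), fun φ => ?_⟩
  have hq : ⟪(c • ((1 : H →L[ℂ] H) + B)) φ, φ⟫
      = (starRingEnd ℂ) c * (((‖φ‖:ℂ))^2 + ⟪B φ, φ⟫) := by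
    simp [inner_smul_left, inner_add_left, ContinuousLinearMap.add_apply,
      ContinuousLinearMap.one_apply, inner_self_eq_norm_sq_to_K]
    ring
  rw [hq, norm_mul]
  have hcn : ‖(starRingEnd ℂ) c‖ = ‖c‖ := by
    rw [Complex.norm_conj]
  rw [hcn]
  set X : ℂ := ((‖φ‖:ℂ))^2 + ⟪B φ, φ⟫ with hX
  have h1 : ‖φ‖^2 ≤ ‖X‖ + ‖⟪B φ, φ⟫‖ := by
    have h2 : ‖((‖φ‖:ℂ))^2‖ = ‖φ‖^2 := by rw [norm_pow, Complex.norm_real, norm_norm]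
    calc ‖φ‖^2 = ‖X - ⟪B φ, φ⟫‖ := by rw [hX]; rw [add_sub_cancel_right, h2]
      _ ≤ ‖X‖ + ‖⟪B φ, φ⟫‖ := norm_sub_le _ _
  have h3 : ‖⟪B φ, φ⟫‖ ≤ ‖B‖ * ‖φ‖^2 := by
    calc ‖⟪B φ, φ⟫‖ ≤ ‖B φ‖ * ‖φ‖ := norm_inner_le_norm _ _
      _ ≤ ‖B‖ * ‖φ‖ * ‖φ‖ := by
          have := B.le_opNorm φ
          nlinarith [norm_nonneg φ]
      _ = ‖B‖ * ‖φ‖^2 := by ring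
  nlinarith [norm_nonneg X]

lemma conj_exp_neg (θ : ℝ) :
    (starRingEnd ℂ) (Complex.exp (-(θ:ℂ) * Complex.I)) = Complex.exp ((θ:ℂ) * Complex.I) := by
  rw [← Complex.exp_conj]
  congr 1
  simp [Complex.conj_I]

lemma heb (A : H →L[ℂ] H)
    (h : ∃ θ : ℝ, ∃ α : ℝ, 0 < α ∧ ∀ φ : H,
      α * ‖φ‖ ^ 2 ≤ (Complex.exp ((θ : ℂ) * Complex.I) * ⟪A φ, φ⟫).re) :
    ∃ c : ℂ, c ≠ 0 ∧ ∃ B G : H →L[ℂ] H, IsSelfAdjoint G ∧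
        (IsSelfAdjoint B ∧ ∃ β : ℝ, 0 < β ∧ ∀ φ : H, β * ‖φ‖ ^ 2 ≤ (⟪B φ, φ⟫).re) ∧
        A = c • (B + Complex.I • G) := by
  obtain ⟨θ, α, hα, h⟩ := h
  set T : H →L[ℂ] H := Complex.exp (-(θ:ℂ) * Complex.I) • A with hT
  have hqT : ∀ φ : H, ⟪T φ, φ⟫ = Complex.exp ((θ:ℂ)*Complex.I) * ⟪A φ, φ⟫ := by
    intro φ
    rw [hT, q_smul, conj_exp_neg]
  set B : H →L[ℂ] H := (1/2 : ℂ) • (T + ContinuousLinearMap.adjoint T) with hB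
  set G : H →L[ℂ] H := (Complex.I/2 : ℂ) • (ContinuousLinearMap.adjoint T - T) with hG
  have hsaB : IsSelfAdjoint B := by
    rw [hB, IsSelfAdjoint, star_smul, star_add]
    simp only [ContinuousLinearMap.star_eq_adjoint, ContinuousLinearMap.adjoint_adjoint]
    rw [show (star (1/2 : ℂ)) = (1/2 : ℂ) by rw [star_div₀, star_one, Complex.star_def, map_ofNat],
      add_comm]
  have hsaG : IsSelfAdjoint G := by
    rw [hG, IsSelfAdjoint, star_smul, star_sub]
    simp only [ContinuousLinearMap.star_eq_adjoint, ContinuousLinearMap.adjoint_adjoint]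
    rw [show (star (Complex.I/2 : ℂ)) = -(Complex.I/2 : ℂ) by
        rw [star_div₀, Complex.star_def, Complex.conj_I, map_ofNat]; ring,
      neg_smul, smul_sub, smul_sub, neg_sub]
  have hTB : (B + Complex.I • G) = T := by
    rw [hB, hG, smul_smul]
    have hII : Complex.I * (Complex.I/2) = -(1/2 : ℂ) := by
      rw [mul_div_assoc', Complex.I_mul_I]
      ring
    rw [hII]
    module
  refine ⟨Complex.exp ((θ:ℂ)*Complex.I), Complex.exp_ne_zero _, B, G, hsaG, ⟨hsaB, α, hα, ?_⟩, ?_⟩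
  · intro φ
    have hBq : ⟪B φ, φ⟫ = (1/2 : ℂ) * (⟪T φ, φ⟫ + ⟪φ, T φ⟫) := by
      rw [hB]
      simp only [ContinuousLinearMap.smul_apply, ContinuousLinearMap.add_apply,
        inner_smul_left, inner_add_left, ContinuousLinearMap.adjoint_inner_left]
      rw [show (starRingEnd ℂ) (1/2:ℂ) = 1/2 from by rw [map_div₀, map_one, map_ofNat]]
    have hsym : (⟪φ, T φ⟫).re = (⟪T φ, φ⟫).re := by
      rw [← inner_conj_symm (T φ) φ, Complex.conj_re]
    have : (⟪B φ, φ⟫).re = (⟪T φ, φ⟫).re := by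
      rw [hBq]
      simp only [Complex.mul_re, Complex.add_re, Complex.conj_re, Complex.conj_im,
        Complex.add_im, Complex.one_re, Complex.one_im, Complex.div_re, Complex.div_im]
      norm_num
      linarith [hsym]
    rw [this, hqT]
    exact h φ
  · rw [hTB, hT, smul_smul, ← Complex.exp_add]
    rw [show (θ:ℂ)*Complex.I + -(θ:ℂ)*Complex.I = 0 by ring, Complex.exp_zero, one_smul]

lemma hec (A : H →L[ℂ] H)
    (h : ∃ θ : ℝ, ∃ α : ℝ, 0 < α ∧ ∀ φ : H,
      α * ‖φ‖ ^ 2 ≤ (Complex.exp ((θ : ℂ) * Complex.I) * ⟪A φ, φ⟫).re) :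
    ∃ c : ℂ, c ≠ 0 ∧ ∃ B : H →L[ℂ] H, ‖B‖ < 1 ∧ A = c • ((1 : H →L[ℂ] H) + B) := by
  obtain ⟨θ, α, hα, h⟩ := h
  set T : H →L[ℂ] H := Complex.exp (-(θ:ℂ) * Complex.I) • A with hT
  have hqT : ∀ φ : H, ⟪T φ, φ⟫ = Complex.exp ((θ:ℂ)*Complex.I) * ⟪A φ, φ⟫ := by
    intro φ
    rw [hT, q_smul, conj_exp_neg]
  have hre : ∀ φ : H, α * ‖φ‖^2 ≤ (⟪T φ, φ⟫).re := fun φ => by rw [hqT]; exact h φ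
  by_cases hH : ∃ ψ : H, ‖ψ‖ = 1
  · obtain ⟨ψ0, hψ0⟩ := hH
    set M := ‖T‖ with hM
    have hMα : α ≤ M := by
      have h1 := hre ψ0
      rw [hψ0, one_pow, mul_one] at h1
      calc α ≤ (⟪T ψ0, ψ0⟫).re := h1
        _ ≤ ‖⟪T ψ0, ψ0⟫‖ := by exact Complex.re_le_norm _
        _ ≤ ‖T ψ0‖ * ‖ψ0‖ := norm_inner_le_norm _ _
        _ ≤ M := by
            rw [hψ0, mul_one]
            exact le_trans (T.le_opNorm ψ0) (by rw [hψ0, mul_one])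
    set d : ℝ := (M^2 + α^2)/(2*α) with hd
    have hd0 : 0 < d := by
      rw [hd]; positivity
    have hdc : ((d:ℝ):ℂ) ≠ 0 := by exact_mod_cast hd0.ne'
    have h2dα : 2*d*α = M^2 + α^2 := by
      rw [hd]; field_simp
    have hαd : α ≤ d := by nlinarith [sq_nonneg (M - α)]
    set B : H →L[ℂ] H := ((d:ℝ):ℂ)⁻¹ • T - 1 with hB
    have hBφ : ∀ φ : H, ‖B φ‖^2 ≤ (1 - α^2/d^2) * ‖φ‖^2 := by
      intro φ
      have hx : B φ = ((d:ℝ):ℂ)⁻¹ • (T φ - ((d:ℝ):ℂ) • φ) := by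
        rw [hB]
        simp only [ContinuousLinearMap.sub_apply, ContinuousLinearMap.smul_apply,
          ContinuousLinearMap.one_apply, smul_sub, smul_smul, inv_mul_cancel₀ hdc, one_smul]
      have hexp : ‖T φ - ((d:ℝ):ℂ) • φ‖^2
          = ‖T φ‖^2 - 2*d*(⟪T φ, φ⟫).re + d^2*‖φ‖^2 := by
        rw [@norm_sub_sq ℂ, inner_smul_right, norm_smul, Complex.norm_real,
          Real.norm_eq_abs, abs_of_pos hd0]
        simp only [Complex.re_ofReal_mul, RCLike.re_to_complex]
        ring
      have hTφ : ‖T φ‖ ≤ M * ‖φ‖ := T.le_opNorm φ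
      have h2 : ‖T φ - ((d:ℝ):ℂ) • φ‖^2 ≤ (d^2 - α^2) * ‖φ‖^2 := by
        rw [hexp]
        have h3 := hre φ
        have h4 : ‖T φ‖^2 ≤ M^2 * ‖φ‖^2 := by nlinarith [norm_nonneg (T φ), norm_nonneg φ]
        nlinarith [hre φ, hd0, h2dα]
      rw [hx, norm_smul]
      have h6 : ‖((d:ℝ):ℂ)⁻¹‖ = d⁻¹ := by
        rw [norm_inv, Complex.norm_real, Real.norm_eq_abs, abs_of_pos hd0]
      rw [h6, mul_pow]
      have h7 : (d⁻¹)^2 * ((d^2 - α^2) * ‖φ‖^2) = (1 - α^2/d^2) * ‖φ‖^2 := by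
        field_simp
      rw [← h7]
      have h8 : (0:ℝ) ≤ (d⁻¹)^2 := by positivity
      nlinarith [h2, norm_nonneg (T φ - ((d:ℝ):ℂ) • φ)]
    have hnn : (0:ℝ) ≤ 1 - α^2/d^2 := by
      rw [sub_nonneg, div_le_one (by positivity)]
      nlinarith
    have hk1 : Real.sqrt (1 - α^2/d^2) < 1 := by
      apply (Real.sqrt_lt' one_pos).mpr
      have : 0 < α^2/d^2 := by positivity
      nlinarith
    have hBnorm : ‖B‖ < 1 := by
      have hb : ‖B‖ ≤ Real.sqrt (1 - α^2/d^2) := by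
        apply ContinuousLinearMap.opNorm_le_bound _ (Real.sqrt_nonneg _)
        intro φ
        have h9 := hBφ φ
        have h10 : ‖B φ‖ = Real.sqrt (‖B φ‖^2) := by
          rw [Real.sqrt_sq (norm_nonneg _)]
        rw [h10]
        calc Real.sqrt (‖B φ‖^2) ≤ Real.sqrt ((1 - α^2/d^2) * ‖φ‖^2) := Real.sqrt_le_sqrt h9
          _ = Real.sqrt (1 - α^2/d^2) * ‖φ‖ := by
              rw [Real.sqrt_mul hnn, Real.sqrt_sq (norm_nonneg _)]
      linarith
    refine ⟨Complex.exp ((θ:ℂ)*Complex.I) * ((d:ℝ):ℂ),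
      mul_ne_zero (Complex.exp_ne_zero _) hdc, B, hBnorm, ?_⟩
    have h1B : (1 : H →L[ℂ] H) + B = ((d:ℝ):ℂ)⁻¹ • T := by
      rw [hB]; abel
    rw [h1B, smul_smul, hT, smul_smul]
    rw [show Complex.exp ((θ:ℂ)*Complex.I) * ((d:ℝ):ℂ) * ((d:ℝ):ℂ)⁻¹
        * Complex.exp (-(θ:ℂ)*Complex.I)
        = Complex.exp ((θ:ℂ)*Complex.I) * Complex.exp (-(θ:ℂ)*Complex.I)
        * (((d:ℝ):ℂ) * ((d:ℝ):ℂ)⁻¹) by ring]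
    rw [mul_inv_cancel₀ hdc, ← Complex.exp_add,
      show (θ:ℂ)*Complex.I + -(θ:ℂ)*Complex.I = 0 by ring, Complex.exp_zero, mul_one, one_smul]
  · have hall : ∀ φ : H, φ = 0 := by
      intro φ
      by_contra hφ
      exact hH ⟨((‖φ‖⁻¹:ℝ):ℂ) • φ, by
        simp [norm_smul, Complex.norm_real, abs_of_pos (inv_pos.mpr (norm_pos_iff.mpr hφ)),
          inv_mul_cancel₀ (norm_ne_zero_iff.mpr hφ)]⟩
    refine ⟨1, one_ne_zero, -1, ?_, ?_⟩
    · have hz : ‖(-1 : H →L[ℂ] H)‖ ≤ 0 := by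
        apply ContinuousLinearMap.opNorm_le_bound _ le_rfl
        intro φ
        rw [hall φ]
        simp
      linarith
    · ext φ
      rw [hall φ]
      simp

lemma hde (A : H →L[ℂ] H) (h0 : (0:ℂ) ∉ closure (numericalRange A)) :
    ∃ θ : ℝ, ∃ α : ℝ, 0 < α ∧ ∀ φ : H,
      α * ‖φ‖ ^ 2 ≤ (Complex.exp ((θ : ℂ) * Complex.I) * ⟪A φ, φ⟫).re := by
  by_cases hH : ∃ ψ : H, ‖ψ‖ = 1
  · obtain ⟨ψ0, hψ0⟩ := hH
    obtain ⟨f, u, hfu, hsep⟩ :=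
      geometric_hahn_banach_point_closed ((numRange_convex A).closure) isClosed_closure h0
    rw [map_zero] at hfu
    have hrep : ∀ ζ : ℂ, f ζ = ζ.re * f 1 + ζ.im * f Complex.I := by
      intro ζ
      have hζ : ζ = ζ.re • (1:ℂ) + ζ.im • Complex.I := by
        rw [Complex.real_smul, Complex.real_smul, mul_one]
        exact (Complex.re_add_im ζ).symm
      conv_lhs => rw [hζ]
      rw [map_add, map_smul, map_smul, smul_eq_mul, smul_eq_mul]
    set c : ℂ := ⟨f 1, f Complex.I⟩ with hc
    have hfc : ∀ ζ : ℂ, f ζ = ((starRingEnd ℂ) c * ζ).re := by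
      intro ζ
      rw [hrep]
      simp only [Complex.mul_re, Complex.conj_re, Complex.conj_im, hc]
      ring
    have hWle : ∀ ψ : H, ‖ψ‖ = 1 → u < ((starRingEnd ℂ) c * ⟪A ψ, ψ⟫).re := by
      intro ψ hψ
      have := hsep _ (subset_closure ⟨ψ, hψ, rfl⟩)
      rwa [hfc] at this
    have hc0 : c ≠ 0 := by
      intro hcz
      have h1 := hWle ψ0 hψ0
      rw [hcz] at h1
      simp only [map_zero, zero_mul, Complex.zero_re] at h1
      linarith
    have habs : (0:ℝ) < ‖c‖ := norm_pos_iff.mpr hc0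
    have hconj : (starRingEnd ℂ) c
        = (‖c‖ : ℂ) * Complex.exp ((↑(-(Complex.arg c)):ℂ) * Complex.I) := by
      conv_lhs => rw [← Complex.norm_mul_exp_arg_mul_I c]
      rw [map_mul, Complex.conj_ofReal, ← Complex.exp_conj]
      congr 2
      simp [Complex.conj_ofReal, Complex.conj_I]
    have key : ∀ ψ : H, ‖ψ‖ = 1 →
        u / ‖c‖ ≤ (Complex.exp ((↑(-(Complex.arg c)):ℂ) * Complex.I) * ⟪A ψ, ψ⟫).re := by
      intro ψ hψ
      have h1 := hWle ψ hψ
      rw [hconj, mul_assoc, Complex.re_ofReal_mul] at h1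
      rw [div_le_iff₀ habs]
      linarith [mul_comm (‖c‖)
        ((Complex.exp ((↑(-(Complex.arg c)):ℂ) * Complex.I) * ⟪A ψ, ψ⟫).re)]
    refine ⟨-(Complex.arg c), u / ‖c‖, div_pos hfu habs, fun φ => ?_⟩
    rcases eq_or_ne φ 0 with rfl | hφ
    · simp
    · obtain ⟨ψ, hψ, hqe⟩ := key_scale A φ hφ
      rw [hqe, show Complex.exp ((↑(-(Complex.arg c)):ℂ) * Complex.I) * (((‖φ‖:ℂ))^2 * ⟪A ψ, ψ⟫)
          = ((‖φ‖^2 : ℝ):ℂ) * (Complex.exp ((↑(-(Complex.arg c)):ℂ) * Complex.I) * ⟪A ψ, ψ⟫) by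
        push_cast; ring]
      rw [Complex.re_ofReal_mul]
      have h2 := key ψ hψ
      nlinarith [sq_nonneg ‖φ‖]
  · have hall : ∀ φ : H, φ = 0 := by
      intro φ
      by_contra hφ
      exact hH ⟨((‖φ‖⁻¹:ℝ):ℂ) • φ, by
        simp [norm_smul, Complex.norm_real, abs_of_pos (inv_pos.mpr (norm_pos_iff.mpr hφ)),
          inv_mul_cancel₀ (norm_ne_zero_iff.mpr hφ)]⟩
    refine ⟨0, 1, one_pos, fun φ => ?_⟩
    rw [hall φ]
    simp

/-- Equivalent formulations of coercivity: (a) ↔ (b), (a) ↔ (c), (a) ↔ (d), (a) ↔ (e). -/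
theorem coercive_iff_equivalents (A : H →L[ℂ] H) :
    (Coercive A ↔
      ∃ c : ℂ, c ≠ 0 ∧ ∃ B G : H →L[ℂ] H, IsSelfAdjoint G ∧
        (IsSelfAdjoint B ∧ ∃ β : ℝ, 0 < β ∧ ∀ φ : H, β * ‖φ‖ ^ 2 ≤ (⟪B φ, φ⟫).re) ∧
        A = c • (B + Complex.I • G)) ∧
    (Coercive A ↔
      ∃ c : ℂ, c ≠ 0 ∧ ∃ B : H →L[ℂ] H, ‖B‖ < 1 ∧ A = c • ((1 : H →L[ℂ] H) + B)) ∧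
    (Coercive A ↔ (0 : ℂ) ∉ closure (numericalRange A)) ∧
    (Coercive A ↔ ∃ θ : ℝ, ∃ α : ℝ, 0 < α ∧ ∀ φ : H,
      α * ‖φ‖ ^ 2 ≤ (Complex.exp ((θ : ℂ) * Complex.I) * ⟪A φ, φ⟫).re) := by
  have hAE : Coercive A → ∃ θ : ℝ, ∃ α : ℝ, 0 < α ∧ ∀ φ : H,
      α * ‖φ‖ ^ 2 ≤ (Complex.exp ((θ : ℂ) * Complex.I) * ⟪A φ, φ⟫).re :=
    fun h => hde A (had A h)
  exact ⟨⟨fun h => heb A (hAE h), hba A⟩, ⟨fun h => hec A (hAE h), hca A⟩,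
    ⟨had A, hda A⟩, ⟨hAE, hea A⟩⟩
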